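/- The graph 3K_4^+ (3K_4 plus one extra parallel edge between some fixed pair of vertices) is strongly Z_7-connected: every Z_7-boundary is achieved by some orientation. -/
import Mathlib


/-- The direction of edge `i` under orientation `o`: if `o i = true` the
reference direction is reversed. -/
def edir {V : Type} {m : ℕ} (ends : Fin m → V × V) (o : Fin m → Bool) (i : Fin m) : V × V :=
  if o i then ((ends i).2, (ends i).1) else ends i

/-- Contribution of edge `i` to `d⁺ - d⁻` at vertex `v`, computed in `ZMod n`. -/
def contrib {V : Type} [DecidableEq V] {m : ℕ} (n : ℕ) (ends : Fin m → V × V)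
    (o : Fin m → Bool) (i : Fin m) (v : V) : ZMod n :=
  (if (edir ends o i).1 = v then 1 else 0) - (if (edir ends o i).2 = v then 1 else 0)

/-- `d⁺_D(v) - d⁻_D(v)` in `ZMod n` for the orientation `o` of the multigraph
with edge-endpoint function `ends`. -/
def netDeg {V : Type} [DecidableEq V] {m : ℕ} (n : ℕ) (ends : Fin m → V × V)
    (o : Fin m → Bool) (v : V) : ZMod n :=
  ∑ i : Fin m, contrib n ends o i v

def threeK4plus : Fin 19 → Fin 4 × Fin 4 :=
  ![(0, 1), (0, 1), (0, 1), (0, 2), (0, 2), (0, 2), (0, 3), (0, 3), (0, 3),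
    (1, 2), (1, 2), (1, 2), (1, 3), (1, 3), (1, 3),
    (2, 3), (2, 3), (2, 3), (2, 3)]


def s3 : Fin 4 → ZMod 7 := ![1, 3, 4, 6]

def s4 : Fin 5 → ZMod 7 := ![0, 2, 3, 4, 5]

def pat3 : Fin 4 → Fin 3 → Bool :=
  ![![true, false, false], ![false, false, false], ![true, true, true], ![true, true, false]]

def pat4 : Fin 5 → Fin 4 → Bool :=
  ![![true, true, false, false], ![true, false, false, false], ![true, true, true, true],
    ![false, false, false, false], ![true, true, true, false]]

def assemble (a b c d e : Fin 4) (f : Fin 5) : Fin 19 → Bool :=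
  ![pat3 a 0, pat3 a 1, pat3 a 2, pat3 b 0, pat3 b 1, pat3 b 2,
    pat3 c 0, pat3 c 1, pat3 c 2, pat3 d 0, pat3 d 1, pat3 d 2,
    pat3 e 0, pat3 e 1, pat3 e 2, pat4 f 0, pat4 f 1, pat4 f 2, pat4 f 3]

def sg (b : Bool) : ZMod 7 := if b then -1 else 1

lemma sum3 : ∀ x : Fin 4, sg (pat3 x 0) + sg (pat3 x 1) + sg (pat3 x 2) = s3 x := by decide

lemma sum4 : ∀ x : Fin 5,
    sg (pat4 x 0) + sg (pat4 x 1) + sg (pat4 x 2) + sg (pat4 x 3) = s4 x := by decide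

lemma contrib_val (o : Fin 19 → Bool) (i : Fin 19) (v : Fin 4) :
    contrib 7 threeK4plus o i v =
      sg (o i) * ((if (threeK4plus i).1 = v then (1 : ZMod 7) else 0) -
        (if (threeK4plus i).2 = v then 1 else 0)) := by
  unfold contrib edir sg
  cases o i <;> simp <;> ring

lemma expand0 (o : Fin 19 → Bool) :
    netDeg 7 threeK4plus o 0 =
      sg (o 0) + sg (o 1) + sg (o 2) + sg (o 3) + sg (o 4) + sg (o 5) + sg (o 6) + sg (o 7) +
        sg (o 8) := by
  unfold netDeg
  simp only [contrib_val]
  simp [Fin.sum_univ_succ, Fin.succ, threeK4plus]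
  try ring

lemma expand1 (o : Fin 19 → Bool) :
    netDeg 7 threeK4plus o 1 =
      -(sg (o 0) + sg (o 1) + sg (o 2)) + (sg (o 9) + sg (o 10) + sg (o 11)) +
        (sg (o 12) + sg (o 13) + sg (o 14)) := by
  unfold netDeg
  simp only [contrib_val]
  simp [Fin.sum_univ_succ, Fin.succ, threeK4plus]
  try ring

lemma expand2 (o : Fin 19 → Bool) :
    netDeg 7 threeK4plus o 2 =
      -(sg (o 3) + sg (o 4) + sg (o 5)) - (sg (o 9) + sg (o 10) + sg (o 11)) +
        (sg (o 15) + sg (o 16) + sg (o 17) + sg (o 18)) := by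
  unfold netDeg
  simp only [contrib_val]
  simp [Fin.sum_univ_succ, Fin.succ, threeK4plus]
  try ring

lemma expand3 (o : Fin 19 → Bool) :
    netDeg 7 threeK4plus o 3 =
      -(sg (o 6) + sg (o 7) + sg (o 8)) - (sg (o 12) + sg (o 13) + sg (o 14)) -
        (sg (o 15) + sg (o 16) + sg (o 17) + sg (o 18)) := by
  unfold netDeg
  simp only [contrib_val]
  simp [Fin.sum_univ_succ, Fin.succ, threeK4plus]
  try ring

lemma eval_assemble (a b c d e : Fin 4) (f : Fin 5) :
    netDeg 7 threeK4plus (assemble a b c d e f) 0 = s3 a + s3 b + s3 c ∧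
    netDeg 7 threeK4plus (assemble a b c d e f) 1 = -s3 a + s3 d + s3 e ∧
    netDeg 7 threeK4plus (assemble a b c d e f) 2 = -s3 b - s3 d + s4 f ∧
    netDeg 7 threeK4plus (assemble a b c d e f) 3 = -s3 c - s3 e - s4 f := by
  have ha := sum3 a
  have hb := sum3 b
  have hc := sum3 c
  have hd := sum3 d
  have he := sum3 e
  have hf := sum4 f
  refine ⟨?_, ?_, ?_, ?_⟩
  · rw [expand0]
    show sg (pat3 a 0) + sg (pat3 a 1) + sg (pat3 a 2) + sg (pat3 b 0) + sg (pat3 b 1) +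
      sg (pat3 b 2) + sg (pat3 c 0) + sg (pat3 c 1) + sg (pat3 c 2) = _
    linear_combination ha + hb + hc
  · rw [expand1]
    show -(sg (pat3 a 0) + sg (pat3 a 1) + sg (pat3 a 2)) +
      (sg (pat3 d 0) + sg (pat3 d 1) + sg (pat3 d 2)) +
      (sg (pat3 e 0) + sg (pat3 e 1) + sg (pat3 e 2)) = _
    linear_combination -ha + hd + he
  · rw [expand2]
    show -(sg (pat3 b 0) + sg (pat3 b 1) + sg (pat3 b 2)) -
      (sg (pat3 d 0) + sg (pat3 d 1) + sg (pat3 d 2)) +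
      (sg (pat4 f 0) + sg (pat4 f 1) + sg (pat4 f 2) + sg (pat4 f 3)) = _
    linear_combination -hb - hd + hf
  · rw [expand3]
    show -(sg (pat3 c 0) + sg (pat3 c 1) + sg (pat3 c 2)) -
      (sg (pat3 e 0) + sg (pat3 e 1) + sg (pat3 e 2)) -
      (sg (pat4 f 0) + sg (pat4 f 1) + sg (pat4 f 2) + sg (pat4 f 3)) = _
    linear_combination -hc - he - hf

lemma key : ∀ t1 t2 t3 : ZMod 7, ∃ a b d : Fin 4,
    (∃ c : Fin 4, s3 a + s3 b + s3 c = t1) ∧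
    (∃ e : Fin 4, -s3 a + s3 d + s3 e = t2) ∧
    (∃ f : Fin 5, -s3 b - s3 d + s4 f = t3) := by
  decide

theorem threeK4plus_strongly_Z7_connected (β : Fin 4 → ZMod 7) (hβ : ∑ v : Fin 4, β v = 0) :
    ∃ o : Fin 19 → Bool, ∀ v : Fin 4, netDeg 7 threeK4plus o v = β v := by
  obtain ⟨a, b, d, ⟨c, h1⟩, ⟨e, h2⟩, ⟨f, h3⟩⟩ := key (β 0) (β 1) (β 2)
  refine ⟨assemble a b c d e f, ?_⟩
  obtain ⟨e0, e1, e2, e3⟩ := eval_assemble a b c d e f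
  have hsum : β 0 + β 1 + β 2 + β 3 = 0 := by
    rw [Fin.sum_univ_four] at hβ; exact hβ
  intro v
  fin_cases v
  · exact e0.trans h1
  · exact e1.trans h2
  · exact e2.trans h3
  · show netDeg 7 threeK4plus (assemble a b c d e f) 3 = β 3
    refine e3.trans ?_; linear_combination -h1 - h2 - h3 - hsum
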